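/- arXiv:2506.07000 — 2 statements merged into one kernel-verified Lean document; each statement's English description precedes it below -/
import Mathlib

section
/- Let a and b be integers with 2 ≤ a ≤ b ≤ 2a. Then the 2-total bondage number of the complete bipartite graph K_{a,b} equals b: b_t^2(K_{a,b}) = b. -/
open SimpleGraph

/-- A set `S` of vertices is a total dominating set of `G` if every vertex of `G`
is adjacent to at least one vertex of `S`. -/
def IsTotalDominatingSet {V : Type*} (G : SimpleGraph V) (S : Set V) : Prop :=
  ∀ v : V, ∃ u ∈ S, G.Adj v u

/-- The total domination number of `G`: the minimum cardinality of a total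
dominating set of `G`. -/
noncomputable def totalDominationNumber {V : Type*} (G : SimpleGraph V) : ℕ :=
  sInf {n : ℕ | ∃ S : Set V, S.ncard = n ∧ IsTotalDominatingSet G S}

/-- A graph has no isolated vertices if every vertex has a neighbor. -/
def NoIsolatedVerts {V : Type*} (G : SimpleGraph V) : Prop :=
  ∀ v : V, ∃ u : V, G.Adj v u

/-- The `k`-total bondage number of `G`: the minimum cardinality of a set `F` of
edges of `G` such that `G − F` has no isolated vertices and the total domination
number of `G − F` is at least `γ_t(G) + k`. -/
noncomputable def kTotalBondage {V : Type*} (G : SimpleGraph V) (k : ℕ) : ℕ :=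
  sInf {m : ℕ | ∃ F : Set (Sym2 V), F ⊆ G.edgeSet ∧ F.ncard = m ∧
    NoIsolatedVerts (G.deleteEdges F) ∧
    totalDominationNumber G + k ≤ totalDominationNumber (G.deleteEdges F)}

private lemma tdn_le {V : Type*} {G : SimpleGraph V} {S : Set V}
    (hS : IsTotalDominatingSet G S) : totalDominationNumber G ≤ S.ncard :=
  Nat.sInf_le ⟨S, rfl, hS⟩

private lemma le_tdn {V : Type*} {G : SimpleGraph V} {k : ℕ}
    (hne : ∃ S : Set V, IsTotalDominatingSet G S)
    (h : ∀ S : Set V, IsTotalDominatingSet G S → k ≤ S.ncard) :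
    k ≤ totalDominationNumber G := by
  apply le_csInf
  · obtain ⟨S, hS⟩ := hne
    exact ⟨S.ncard, S, rfl, hS⟩
  · rintro n ⟨S, rfl, hS⟩
    exact h S hS

private lemma two_le_ncard_tds {V : Type*} [Finite V] [Nonempty V] {G : SimpleGraph V}
    {S : Set V} (hS : IsTotalDominatingSet G S) : 2 ≤ S.ncard := by
  obtain ⟨u, huS, -⟩ := hS (Classical.arbitrary V)
  obtain ⟨w, hwS, hadj⟩ := hS u
  have hwu : w ≠ u := by rintro rfl; exact G.irrefl hadj
  have h2 : ({w, u} : Set V).ncard = 2 := Set.ncard_pair hwu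
  calc 2 = ({w, u} : Set V).ncard := h2.symm
    _ ≤ S.ncard := by
        apply Set.ncard_le_ncard ?_ S.toFinite
        intro x hx
        simp only [Set.mem_insert_iff, Set.mem_singleton_iff] at hx
        rcases hx with rfl | rfl <;> assumption

private lemma tdn_cbg (a b : ℕ) (ha : 0 < a) (hb : 0 < b) :
    totalDominationNumber (completeBipartiteGraph (Fin a) (Fin b)) = 2 := by
  haveI : Nonempty (Fin a ⊕ Fin b) := ⟨Sum.inl ⟨0, ha⟩⟩
  have hTDS : IsTotalDominatingSet (completeBipartiteGraph (Fin a) (Fin b))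
      {Sum.inl ⟨0, ha⟩, Sum.inr ⟨0, hb⟩} := by
    intro v
    rcases v with x | y
    · exact ⟨Sum.inr ⟨0, hb⟩, by simp, by simp⟩
    · exact ⟨Sum.inl ⟨0, ha⟩, by simp, by simp⟩
  apply le_antisymm
  · have := tdn_le hTDS
    rwa [Set.ncard_pair (by simp)] at this
  · exact le_tdn ⟨_, hTDS⟩ (fun S hS => two_le_ncard_tds hS)

private lemma upper_mem (a b : ℕ) (ha : 2 ≤ a) (hab : a ≤ b) :
    ∃ F : Set (Sym2 (Fin a ⊕ Fin b)),
      F ⊆ (completeBipartiteGraph (Fin a) (Fin b)).edgeSet ∧ F.ncard = b ∧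
      NoIsolatedVerts ((completeBipartiteGraph (Fin a) (Fin b)).deleteEdges F) ∧
      totalDominationNumber (completeBipartiteGraph (Fin a) (Fin b)) + 2 ≤
        totalDominationNumber ((completeBipartiteGraph (Fin a) (Fin b)).deleteEdges F) := by
  have ha0 : 0 < a := by omega
  have hb2 : 2 ≤ b := le_trans ha hab
  set G := completeBipartiteGraph (Fin a) (Fin b) with hG
  set f : Fin b → Sym2 (Fin a ⊕ Fin b) :=
    fun j => s(Sum.inl ⟨j.val % a, Nat.mod_lt _ ha0⟩, Sum.inr j) with hf
  have hfinj : Function.Injective f := by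
    intro j1 j2 h
    simp only [hf, Sym2.eq_iff] at h
    rcases h with ⟨-, h⟩ | ⟨h, -⟩
    · exact Sum.inr.inj h
    · exact absurd h (by simp)
  have hmem : ∀ (x : Fin a) (j : Fin b),
      s(Sum.inl x, Sum.inr j) ∈ Set.range f ↔ (x : ℕ) = j.val % a := by
    intro x j
    constructor
    · rintro ⟨j', hj'⟩
      simp only [hf, Sym2.eq_iff] at hj'
      rcases hj' with ⟨h1, h2⟩ | ⟨h1, -⟩
      · cases Sum.inr.inj h2
        cases Sum.inl.inj h1
        rfl
      · exact absurd h1 (by simp)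
    · intro h
      refine ⟨j, ?_⟩
      simp only [hf]
      have hx : (⟨j.val % a, Nat.mod_lt _ ha0⟩ : Fin a) = x := Fin.ext h.symm
      rw [hx]
  have hsub : Set.range f ⊆ G.edgeSet := by
    rintro e ⟨j, rfl⟩
    simp only [hf, SimpleGraph.mem_edgeSet]
    simp [hG]
  have hncard : (Set.range f).ncard = b := by
    rw [← Set.image_univ, Set.ncard_image_of_injective _ hfinj, Set.ncard_univ,
      Nat.card_eq_fintype_card, Fintype.card_fin]
  have hiso : NoIsolatedVerts (G.deleteEdges (Set.range f)) := by
    intro v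
    rcases v with x | y
    · by_cases h0 : x.val = 0
      · refine ⟨Sum.inr ⟨1, by omega⟩, ?_⟩
        rw [deleteEdges_adj]
        refine ⟨by simp [hG], ?_⟩
        rw [hmem]
        simp only
        rw [Nat.mod_eq_of_lt (by omega)]
        omega
      · refine ⟨Sum.inr ⟨0, by omega⟩, ?_⟩
        rw [deleteEdges_adj]
        refine ⟨by simp [hG], ?_⟩
        rw [hmem]
        simp only
        rw [Nat.zero_mod]
        omega
    · by_cases h0 : y.val % a = 0
      · refine ⟨Sum.inl ⟨1, by omega⟩, ?_⟩
        rw [deleteEdges_adj]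
        refine ⟨by simp [hG], ?_⟩
        rw [Sym2.eq_swap, hmem]
        simp only
        omega
      · refine ⟨Sum.inl ⟨0, by omega⟩, ?_⟩
        rw [deleteEdges_adj]
        refine ⟨by simp [hG], ?_⟩
        rw [Sym2.eq_swap, hmem]
        simp only
        omega
  refine ⟨Set.range f, hsub, hncard, hiso, ?_⟩
  rw [tdn_cbg a b ha0 (by omega)]
  apply le_tdn
  · refine ⟨Set.univ, fun v => ?_⟩
    obtain ⟨u, hu⟩ := hiso v
    exact ⟨u, Set.mem_univ u, hu⟩
  · intro S hS
    have getA : ∀ j : Fin b, ∃ x : Fin a, Sum.inl x ∈ S ∧ (x : ℕ) ≠ j.val % a := by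
      intro j
      obtain ⟨u, huS, hadj⟩ := hS (Sum.inr j)
      rw [deleteEdges_adj] at hadj
      rcases u with x | y
      · refine ⟨x, huS, fun hx => hadj.2 ?_⟩
        rw [Sym2.eq_swap, hmem]
        exact hx
      · exact absurd hadj.1 (by simp [hG])
    have getB : ∀ x : Fin a, ∃ y : Fin b, Sum.inr y ∈ S ∧ (x : ℕ) ≠ y.val % a := by
      intro x
      obtain ⟨u, huS, hadj⟩ := hS (Sum.inl x)
      rw [deleteEdges_adj] at hadj
      rcases u with x' | y
      · exact absurd hadj.1 (by simp [hG])
      · refine ⟨y, huS, fun hx => hadj.2 ?_⟩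
        rw [hmem]
        exact hx
    obtain ⟨x1, hx1S, -⟩ := getA ⟨0, by omega⟩
    obtain ⟨x2, hx2S, hx2⟩ := getA ⟨x1.val, by omega⟩
    have hx12 : x1 ≠ x2 := by
      intro h
      apply hx2
      rw [← h]
      exact (Nat.mod_eq_of_lt x1.isLt).symm
    obtain ⟨y1, hy1S, -⟩ := getB ⟨0, ha0⟩
    obtain ⟨y2, hy2S, hy2⟩ := getB ⟨y1.val % a, Nat.mod_lt _ ha0⟩
    have hy12 : y1 ≠ y2 := by
      intro h
      apply hy2
      rw [← h]
    have hsub4 : ({Sum.inl x1, Sum.inl x2, Sum.inr y1, Sum.inr y2} :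
        Set (Fin a ⊕ Fin b)) ⊆ S := by
      intro v hv
      simp only [Set.mem_insert_iff, Set.mem_singleton_iff] at hv
      rcases hv with rfl | rfl | rfl | rfl <;> assumption
    have hc4 : ({Sum.inl x1, Sum.inl x2, Sum.inr y1, Sum.inr y2} :
        Set (Fin a ⊕ Fin b)).ncard = 4 := by
      rw [Set.ncard_insert_of_notMem (by simp [hx12]) (Set.toFinite _),
        Set.ncard_insert_of_notMem (by simp) (Set.toFinite _),
        Set.ncard_pair (by simp [hy12])]
    calc 2 + 2 = ({Sum.inl x1, Sum.inl x2, Sum.inr y1, Sum.inr y2} :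
        Set (Fin a ⊕ Fin b)).ncard := hc4.symm
      _ ≤ S.ncard := Set.ncard_le_ncard hsub4 S.toFinite

private lemma lower_bd (a b : ℕ) (ha : 2 ≤ a) (hab : a ≤ b) (hb2a : b ≤ 2 * a)
    (m : ℕ) (F : Set (Sym2 (Fin a ⊕ Fin b)))
    (hFsub : F ⊆ (completeBipartiteGraph (Fin a) (Fin b)).edgeSet)
    (hFc : F.ncard = m)
    (hiso : NoIsolatedVerts ((completeBipartiteGraph (Fin a) (Fin b)).deleteEdges F))
    (hge : totalDominationNumber (completeBipartiteGraph (Fin a) (Fin b)) + 2 ≤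
      totalDominationNumber ((completeBipartiteGraph (Fin a) (Fin b)).deleteEdges F)) :
    b ≤ m := by
  classical
  set G := completeBipartiteGraph (Fin a) (Fin b) with hG
  rw [tdn_cbg a b (by omega) (by omega)] at hge
  by_contra hmb
  push_neg at hmb
  set P : Finset (Fin a × Fin b) :=
    Finset.univ.filter (fun p => s(Sum.inl p.1, Sum.inr p.2) ∈ F) with hP
  have hPmem : ∀ p : Fin a × Fin b, p ∈ P ↔ s(Sum.inl p.1, Sum.inr p.2) ∈ F := by
    intro p
    simp [hP]
  have hFeq : F = (fun p : Fin a × Fin b => s(Sum.inl p.1, Sum.inr p.2)) '' ↑P := by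
    apply Set.eq_of_subset_of_subset
    · intro e he
      revert he
      induction e using Sym2.ind with
      | _ u v =>
        intro he
        have hadj := hFsub he
        rw [SimpleGraph.mem_edgeSet] at hadj
        rcases u with x | y <;> rcases v with x' | y'
        · exact absurd hadj (by simp [hG])
        · exact ⟨(x, y'), Finset.mem_coe.2 ((hPmem _).2 he), rfl⟩
        · refine ⟨(x', y), Finset.mem_coe.2 ((hPmem _).2 ?_), Sym2.eq_swap⟩
          rw [Sym2.eq_swap]
          exact he
        · exact absurd hadj (by simp [hG])
    · rintro e ⟨p, hp, rfl⟩
      exact (hPmem p).1 (Finset.mem_coe.1 hp)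
  have hinj : Function.Injective
      (fun p : Fin a × Fin b => s(Sum.inl p.1, Sum.inr p.2)) := by
    intro p q h
    simp only [Sym2.eq_iff] at h
    rcases h with ⟨h1, h2⟩ | ⟨h1, -⟩
    · exact Prod.ext (Sum.inl.inj h1) (Sum.inr.inj h2)
    · exact absurd h1 (by simp)
  have hmP : m = P.card := by
    rw [← hFc, hFeq, Set.ncard_image_of_injective _ hinj, Set.ncard_coe_finset]
  obtain ⟨y0, hy0⟩ : ∃ y : Fin b, ∀ x : Fin a, (x, y) ∉ P := by
    by_contra h
    push_neg at h
    have hsubu : (Finset.univ : Finset (Fin b)) ⊆ P.image Prod.snd := by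
      intro y _
      obtain ⟨x, hx⟩ := h y
      exact Finset.mem_image.2 ⟨(x, y), hx, rfl⟩
    have h1 := Finset.card_le_card hsubu
    rw [Finset.card_univ, Fintype.card_fin] at h1
    have h2 := Finset.card_image_le (f := Prod.snd) (s := P)
    omega
  have hfib : P.card = ∑ x : Fin a, (P.filter (fun p => p.1 = x)).card :=
    Finset.card_eq_sum_card_fiberwise (fun p _ => Finset.mem_univ _)
  obtain ⟨x1, hx1⟩ : ∃ x : Fin a, (P.filter (fun p => p.1 = x)).card ≤ 1 := by
    by_contra h
    push_neg at h
    have h2a : 2 * a ≤ ∑ x : Fin a, (P.filter (fun p => p.1 = x)).card := by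
      calc 2 * a = ∑ _x : Fin a, 2 := by
            rw [Finset.sum_const, Finset.card_univ, Fintype.card_fin, smul_eq_mul]
            ring
        _ ≤ _ := Finset.sum_le_sum (fun x _ => h x)
    omega
  obtain ⟨x2, hx12, hcov⟩ : ∃ x2 : Fin a, x2 ≠ x1 ∧
      ∀ j : Fin b, (x1, j) ∉ P ∨ (x2, j) ∉ P := by
    rcases Nat.le_one_iff_eq_zero_or_eq_one.1 hx1 with h0 | h1
    · have hx1e : ∀ j, (x1, j) ∉ P := by
        intro j hj
        have hmem' : (x1, j) ∈ P.filter (fun p => p.1 = x1) :=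
          Finset.mem_filter.2 ⟨hj, rfl⟩
        rw [Finset.card_eq_zero] at h0
        rw [h0] at hmem'
        exact absurd hmem' (Finset.notMem_empty _)
      by_cases hx10 : x1.val = 0
      · refine ⟨⟨1, by omega⟩, ?_, fun j => Or.inl (hx1e j)⟩
        intro h
        rw [← h] at hx10
        simp at hx10
      · exact ⟨⟨0, by omega⟩, fun h => hx10 (by rw [← h]), fun j => Or.inl (hx1e j)⟩
    · obtain ⟨p, hp⟩ := Finset.card_eq_one.1 h1
      have hpP : p ∈ P ∧ p.1 = x1 := by
        have := Finset.mem_filter.1 (hp ▸ Finset.mem_singleton_self p)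
        exact this
      have hpeq : p = (x1, p.2) := by
        rw [← hpP.2]
      have hx1j : ∀ j' : Fin b, (x1, j') ∈ P → j' = p.2 := by
        intro j' hj'
        have hmem' : (x1, j') ∈ P.filter (fun q => q.1 = x1) :=
          Finset.mem_filter.2 ⟨hj', rfl⟩
        rw [hp, Finset.mem_singleton] at hmem'
        exact congrArg Prod.snd hmem'
      obtain ⟨u, hu⟩ := hiso (Sum.inr p.2)
      rw [deleteEdges_adj] at hu
      rcases u with x2 | y'
      · have hx2j : (x2, p.2) ∉ P := by
          intro hc
          apply hu.2
          rw [Sym2.eq_swap]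
          exact (hPmem _).1 hc
        have hx2ne : x2 ≠ x1 := by
          intro h
          apply hx2j
          rw [h, ← hpeq]
          exact hpP.1
        refine ⟨x2, hx2ne, fun j' => ?_⟩
        by_cases hj' : (x1, j') ∈ P
        · right
          rw [hx1j j' hj']
          exact hx2j
        · exact Or.inl hj'
      · exact absurd hu.1 (by simp [hG])
  have hTDS : IsTotalDominatingSet (G.deleteEdges F)
      {Sum.inr y0, Sum.inl x1, Sum.inl x2} := by
    intro v
    rcases v with x | j'
    · refine ⟨Sum.inr y0, by simp, ?_⟩
      rw [deleteEdges_adj]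
      exact ⟨by simp [hG], fun hc => hy0 x ((hPmem _).2 hc)⟩
    · rcases hcov j' with hc | hc
      · refine ⟨Sum.inl x1, by simp, ?_⟩
        rw [deleteEdges_adj]
        refine ⟨by simp [hG], fun hce => hc ((hPmem _).2 ?_)⟩
        rw [Sym2.eq_swap] at hce
        exact hce
      · refine ⟨Sum.inl x2, by simp, ?_⟩
        rw [deleteEdges_adj]
        refine ⟨by simp [hG], fun hce => hc ((hPmem _).2 ?_)⟩
        rw [Sym2.eq_swap] at hce
        exact hce
  have h3 : ({Sum.inr y0, Sum.inl x1, Sum.inl x2} : Set (Fin a ⊕ Fin b)).ncard ≤ 3 := by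
    calc ({Sum.inr y0, Sum.inl x1, Sum.inl x2} : Set (Fin a ⊕ Fin b)).ncard
        ≤ ({Sum.inl x1, Sum.inl x2} : Set (Fin a ⊕ Fin b)).ncard + 1 :=
          Set.ncard_insert_le _ _
      _ ≤ (({Sum.inl x2} : Set (Fin a ⊕ Fin b)).ncard + 1) + 1 :=
          Nat.add_le_add_right (Set.ncard_insert_le _ _) 1
      _ = 3 := by rw [Set.ncard_singleton]
  have hle := tdn_le hTDS
  omega

/-- For `2 ≤ a ≤ b ≤ 2a`, the `2`-total bondage number of the complete
bipartite graph `K_{a,b}` equals `b`. -/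
theorem kTotalBondage_completeBipartiteGraph_two (a b : ℕ) (ha : 2 ≤ a)
    (hab : a ≤ b) (hb2a : b ≤ 2 * a) :
    kTotalBondage (completeBipartiteGraph (Fin a) (Fin b)) 2 = b := by
  apply le_antisymm
  · exact Nat.sInf_le (upper_mem a b ha hab)
  · apply le_csInf
    · exact ⟨b, upper_mem a b ha hab⟩
    · rintro m ⟨F, hFsub, hFc, hiso, hge⟩
      exact lower_bd a b ha hab hb2a m F hFsub hFc hiso hge
end

section
/- For any positive integers k and b with 2b ≥ k, there exists a finite simple graph G with no isolated vertices such that the k-total bondage number of G equals b: b_t^k(G) = b. -/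
open SimpleGraph

set_option linter.unusedSectionVars false
set_option linter.unusedVariables false
set_option linter.unnecessarySimpa false
set_option linter.unreachableTactic false
set_option linter.unusedTactic false
set_option maxHeartbeats 1000000

namespace KTB

lemma tdn_le {V : Type*} {G : SimpleGraph V} {S : Set V}
    (h : IsTotalDominatingSet G S) : totalDominationNumber G ≤ S.ncard :=
  Nat.sInf_le ⟨S, rfl, h⟩
lemma univ_tds {V : Type*} {G : SimpleGraph V} (h : NoIsolatedVerts G) :
    IsTotalDominatingSet G Set.univ := fun v => by
  obtain ⟨u, hu⟩ := h v; exact ⟨u, trivial, hu⟩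
lemma exists_min_tds {V : Type*} [Fintype V] {G : SimpleGraph V} (h : NoIsolatedVerts G) :
    ∃ S : Set V, IsTotalDominatingSet G S ∧ S.ncard = totalDominationNumber G := by
  have hne : {n : ℕ | ∃ S : Set V, S.ncard = n ∧ IsTotalDominatingSet G S}.Nonempty :=
    ⟨(Set.univ : Set V).ncard, Set.univ, rfl, univ_tds h⟩
  obtain ⟨S, hS1, hS2⟩ := Nat.sInf_mem hne
  exact ⟨S, hS2, hS1⟩
lemma le_tdn {V : Type*} [Fintype V] {G : SimpleGraph V} (h : NoIsolatedVerts G) {n : ℕ}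
    (hall : ∀ S : Set V, IsTotalDominatingSet G S → n ≤ S.ncard) :
    n ≤ totalDominationNumber G := by
  obtain ⟨S, hS, hcard⟩ := exists_min_tds h
  exact hcard ▸ hall S hS

lemma two_le_ncard {α : Type*} [Finite α] {s : Set α} {x y : α}
    (hx : x ∈ s) (hy : y ∈ s) (hxy : x ≠ y) : 2 ≤ s.ncard := by
  have h : ({x, y} : Set α).ncard ≤ s.ncard :=
    Set.ncard_le_ncard (by simp [Set.insert_subset_iff, hx, hy]) (Set.toFinite s)
  rwa [Set.ncard_pair hxy] at h
lemma three_le_ncard {α : Type*} [Finite α] {s : Set α} {x y z : α}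
    (hx : x ∈ s) (hy : y ∈ s) (hz : z ∈ s)
    (hxy : x ≠ y) (hxz : x ≠ z) (hyz : y ≠ z) : 3 ≤ s.ncard := by
  have h : ({x, y, z} : Set α).ncard ≤ s.ncard :=
    Set.ncard_le_ncard (by simp [Set.insert_subset_iff, hx, hy, hz]) (Set.toFinite s)
  rw [Set.ncard_insert_of_notMem (by simp [hxy, hxz]), Set.ncard_pair hyz] at h
  omega
lemma four_le_ncard {α : Type*} [Finite α] {s : Set α} {x y z w : α}
    (hx : x ∈ s) (hy : y ∈ s) (hz : z ∈ s) (hw : w ∈ s)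
    (hxy : x ≠ y) (hxz : x ≠ z) (hxw : x ≠ w)
    (hyz : y ≠ z) (hyw : y ≠ w) (hzw : z ≠ w) : 4 ≤ s.ncard := by
  have h : ({x, y, z, w} : Set α).ncard ≤ s.ncard :=
    Set.ncard_le_ncard (by simp [Set.insert_subset_iff, hx, hy, hz, hw]) (Set.toFinite s)
  rw [Set.ncard_insert_of_notMem (by simp [hxy, hxz, hxw]),
    Set.ncard_insert_of_notMem (by simp [hyz, hyw]), Set.ncard_pair hzw] at h
  omega
lemma ncard_le_four {α : Type*} [Finite α] (x y z w : α) :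
    ({x, y, z, w} : Set α).ncard ≤ 4 := by
  calc ({x, y, z, w} : Set α).ncard
      ≤ ({y, z, w} : Set α).ncard + 1 := Set.ncard_insert_le _ _
    _ ≤ (({z, w} : Set α).ncard + 1) + 1 := by
        have := Set.ncard_insert_le y ({z, w} : Set α); omega
    _ ≤ ((({w} : Set α).ncard + 1) + 1) + 1 := by
        have := Set.ncard_insert_le z ({w} : Set α); omega
    _ ≤ 4 := by simp [Set.ncard_singleton]

variable {ι W : Type*}

/-- disjoint union of graphs on `ι × W` -/
def UG (C : ι → SimpleGraph W) : SimpleGraph (ι × W) where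
  Adj x y := x.1 = y.1 ∧ (C x.1).Adj x.2 y.2
  symm := by constructor; rintro ⟨i, x⟩ ⟨i', y⟩ ⟨rfl, h⟩; exact ⟨rfl, h.symm⟩
  loopless := by constructor; rintro ⟨i, x⟩ ⟨-, h⟩; exact (C i).irrefl h

@[simp] lemma UG_adj (C : ι → SimpleGraph W) (x y : ι × W) :
    (UG C).Adj x y ↔ x.1 = y.1 ∧ (C x.1).Adj x.2 y.2 := Iff.rfl

lemma UG_tds_iff (C : ι → SimpleGraph W) (S : Set (ι × W)) :
    IsTotalDominatingSet (UG C) S ↔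
      ∀ i, IsTotalDominatingSet (C i) {x | (i, x) ∈ S} := by
  constructor
  · intro h i x
    obtain ⟨⟨i', u⟩, hu, h1, h2⟩ := h (i, x)
    dsimp at h1; subst h1
    exact ⟨u, hu, h2⟩
  · rintro h ⟨i, x⟩
    obtain ⟨u, hu, h2⟩ := h i x
    exact ⟨(i, u), hu, rfl, h2⟩

lemma UG_noIso_iff (C : ι → SimpleGraph W) :
    NoIsolatedVerts (UG C) ↔ ∀ i, NoIsolatedVerts (C i) := by
  constructor
  · intro h i x
    obtain ⟨⟨i', u⟩, h1, h2⟩ := h (i, x)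
    dsimp at h1; subst h1
    exact ⟨u, h2⟩
  · rintro h ⟨i, x⟩
    obtain ⟨u, h2⟩ := h i x
    exact ⟨(i, u), rfl, h2⟩

lemma UG_deleteEdges (C : ι → SimpleGraph W) (F : Set (Sym2 (ι × W))) :
    (UG C).deleteEdges F =
      UG (fun i => (C i).deleteEdges (Sym2.map (Prod.mk i) ⁻¹' F)) := by
  ext ⟨i, x⟩ ⟨i', y⟩
  simp only [deleteEdges_adj, UG_adj]
  constructor
  · rintro ⟨⟨rfl, h⟩, hf⟩
    exact ⟨rfl, h, hf⟩
  · rintro ⟨rfl, h, hf⟩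
    exact ⟨⟨rfl, h⟩, hf⟩

lemma ncard_eq_sum_slices [Fintype ι] [Fintype W] (S : Set (ι × W)) :
    S.ncard = ∑ i, {x | (i, x) ∈ S}.ncard := by
  classical
  rw [Set.ncard_eq_toFinset_card' S]
  rw [Finset.card_eq_sum_card_fiberwise
    (f := Prod.fst) (t := Finset.univ) (fun x _ => Finset.mem_univ _)]
  refine Finset.sum_congr rfl fun i _ => ?_
  rw [Set.ncard_eq_toFinset_card' _]
  refine Finset.card_bij (fun p _ => p.2) ?_ ?_ ?_
  · rintro ⟨i', x⟩ hp
    simp only [Finset.mem_filter, Set.mem_toFinset] at hp ⊢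
    obtain ⟨h1, h2⟩ := hp
    subst h2; exact h1
  · rintro ⟨i1, x1⟩ h1 ⟨i2, x2⟩ h2 h
    simp only [Finset.mem_filter, Set.mem_toFinset] at h1 h2
    obtain ⟨-, h1'⟩ := h1; obtain ⟨-, h2'⟩ := h2
    subst h1'; subst h2'; subst h; rfl
  · intro x hx
    simp only [Set.mem_toFinset] at hx
    refine ⟨(i, x), ?_, rfl⟩
    simp only [Finset.mem_filter, Set.mem_toFinset]
    exact ⟨hx, trivial⟩

lemma UG_tdn [Fintype ι] [Fintype W] (C : ι → SimpleGraph W)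
    (h : ∀ i, NoIsolatedVerts (C i)) :
    totalDominationNumber (UG C) = ∑ i, totalDominationNumber (C i) := by
  classical
  apply le_antisymm
  · choose T hT hTcard using fun i => exists_min_tds (h i)
    calc totalDominationNumber (UG C) ≤ ({p : ι × W | p.2 ∈ T p.1}).ncard := by
          apply tdn_le
          rw [UG_tds_iff]
          intro i
          exact hT i
      _ = ∑ i, totalDominationNumber (C i) := by
          rw [ncard_eq_sum_slices]
          exact Finset.sum_congr rfl fun i _ => hTcard i
  · apply le_tdn ((UG_noIso_iff C).2 h)
    intro S hS
    rw [UG_tds_iff] at hS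
    rw [ncard_eq_sum_slices]
    exact Finset.sum_le_sum fun i _ => tdn_le (hS i)



inductive Lbl | U | V | P | Q deriving DecidableEq
instance : Fintype Lbl :=
  ⟨{Lbl.U, Lbl.V, Lbl.P, Lbl.Q}, fun x => by cases x <;> simp⟩

abbrev Wt (M : ℕ) := Lbl ⊕ Fin M

variable {M : ℕ}

@[simp] def ul : Wt M := Sum.inl Lbl.U
@[simp] def vl : Wt M := Sum.inl Lbl.V
@[simp] def pl : Wt M := Sum.inl Lbl.P
@[simp] def ql : Wt M := Sum.inl Lbl.Q
@[simp] def wl (t : Fin M) : Wt M := Sum.inr t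

def R (e : Bool) (j : ℕ) : Wt M → Wt M → Prop
  | Sum.inl Lbl.U, Sum.inl Lbl.P => True
  | Sum.inl Lbl.V, Sum.inl Lbl.Q => True
  | Sum.inl Lbl.U, Sum.inl Lbl.V => e = true
  | Sum.inl Lbl.U, Sum.inr _ => True
  | Sum.inl Lbl.V, Sum.inr t => t.val < j
  | _, _ => False

def cg (e : Bool) (j M : ℕ) : SimpleGraph (Wt M) where
  Adj x y := R e j x y ∨ R e j y x
  symm := ⟨fun x y h => h.symm⟩
  loopless := by
    constructor
    intro x h
    rcases x with l | t
    · cases l <;> simp [R] at h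
    · simp [R] at h

lemma cg_adj (e : Bool) (j M : ℕ) (x y : Wt M) :
    (cg e j M).Adj x y ↔ R e j x y ∨ R e j y x := Iff.rfl

lemma nbrs_p {e : Bool} {j : ℕ} {y : Wt M} (h : (cg e j M).Adj pl y) : y = ul := by
  rcases y with l | t
  · cases l <;> simp [cg_adj, R] at h ⊢
  · simp [cg_adj, R] at h
lemma nbrs_q {e : Bool} {j : ℕ} {y : Wt M} (h : (cg e j M).Adj ql y) : y = vl := by
  rcases y with l | t
  · cases l <;> simp [cg_adj, R] at h ⊢
  · simp [cg_adj, R] at h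
lemma nbrs_w {e : Bool} {j : ℕ} {t : Fin M} {y : Wt M} (h : (cg e j M).Adj (wl t) y) :
    y = ul ∨ y = vl := by
  rcases y with l | s
  · cases l <;> simp [cg_adj, R] at h ⊢
  · simp [cg_adj, R] at h
lemma nbrs_w_inactive {e : Bool} {j : ℕ} {t : Fin M} (ht : j ≤ t.val) {y : Wt M}
    (h : (cg e j M).Adj (wl t) y) : y = ul := by
  rcases y with l | s
  · cases l <;> simp [cg_adj, R] at h ⊢
    omega
  · simp [cg_adj, R] at h
lemma nbrs_u {e : Bool} {j : ℕ} {y : Wt M} (h : (cg e j M).Adj ul y) :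
    y = pl ∨ y = vl ∨ ∃ t, y = wl t := by
  rcases y with l | s
  · cases l <;> simp [cg_adj, R] at h ⊢
  · simp
lemma nbrs_u_false {j : ℕ} {y : Wt M} (h : (cg false j M).Adj ul y) :
    y = pl ∨ ∃ t, y = wl t := by
  rcases y with l | s
  · cases l <;> simp [cg_adj, R] at h ⊢
  · simp
lemma nbrs_v {e : Bool} {j : ℕ} {y : Wt M} (h : (cg e j M).Adj vl y) :
    y = ql ∨ y = ul ∨ ∃ t : Fin M, t.val < j ∧ y = wl t := by
  rcases y with l | s
  · cases l <;> simp [cg_adj, R] at h ⊢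
  · simp [cg_adj, R] at h
    exact Or.inr (Or.inr ⟨s, h, rfl⟩)
lemma nbrs_v_false {j : ℕ} {y : Wt M} (h : (cg false j M).Adj vl y) :
    y = ql ∨ ∃ t : Fin M, t.val < j ∧ y = wl t := by
  rcases y with l | s
  · cases l <;> simp [cg_adj, R] at h ⊢
  · simp [cg_adj, R] at h
    exact Or.inr ⟨s, h, rfl⟩

lemma adj_up (e : Bool) (j : ℕ) : (cg e j M).Adj ul pl := Or.inl (by simp [R])
lemma adj_vq (e : Bool) (j : ℕ) : (cg e j M).Adj vl ql := Or.inl (by simp [R])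
lemma adj_uv (j : ℕ) : (cg true j M).Adj ul vl := Or.inl (by simp [R])
lemma adj_uw (e : Bool) (j : ℕ) (t : Fin M) : (cg e j M).Adj ul (wl t) := Or.inl (by simp [R])
lemma adj_vw (e : Bool) (j : ℕ) (t : Fin M) (ht : t.val < j) :
    (cg e j M).Adj vl (wl t) := Or.inl (by simpa [R] using ht)
lemma not_adj_uv_false (j : ℕ) : ¬ (cg false j M).Adj ul vl := by
  simp [cg_adj, R]

section Comp

variable {e : Bool} {j : ℕ} {Fc : Set (Sym2 (Wt M))}

lemma cg_noIso (h : e = true ∨ (1 ≤ j ∧ 1 ≤ M)) : NoIsolatedVerts (cg e j M) := by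
  intro x
  rcases x with l | t
  · cases l
    · exact ⟨pl, adj_up e j⟩
    · rcases h with rfl | ⟨hj, hM⟩
      · exact ⟨ul, (adj_uv j).symm⟩
      · exact ⟨wl ⟨0, hM⟩, adj_vw e j _ (by show 0 < j; omega)⟩
    · exact ⟨ul, (adj_up e j).symm⟩
    · exact ⟨vl, (adj_vq e j).symm⟩
  · exact ⟨ul, (adj_uw e j t).symm⟩

lemma surv_p (hIso : NoIsolatedVerts ((cg e j M).deleteEdges Fc)) :
    ((cg e j M).deleteEdges Fc).Adj pl ul := by
  obtain ⟨y, hy⟩ := hIso pl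
  rw [deleteEdges_adj] at hy
  have h := nbrs_p hy.1
  subst h
  exact deleteEdges_adj.2 hy

lemma surv_q (hIso : NoIsolatedVerts ((cg e j M).deleteEdges Fc)) :
    ((cg e j M).deleteEdges Fc).Adj ql vl := by
  obtain ⟨y, hy⟩ := hIso ql
  rw [deleteEdges_adj] at hy
  have h := nbrs_q hy.1
  subst h
  exact deleteEdges_adj.2 hy

lemma surv_w (hIso : NoIsolatedVerts ((cg e j M).deleteEdges Fc)) (t : Fin M) :
    ((cg e j M).deleteEdges Fc).Adj (wl t) ul ∨
      ((cg e j M).deleteEdges Fc).Adj (wl t) vl := by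
  obtain ⟨y, hy⟩ := hIso (wl t)
  rw [deleteEdges_adj] at hy
  rcases nbrs_w hy.1 with h | h <;> subst h
  · exact Or.inl (deleteEdges_adj.2 hy)
  · exact Or.inr (deleteEdges_adj.2 hy)

lemma surv_w_inactive (hIso : NoIsolatedVerts ((cg e j M).deleteEdges Fc))
    {t : Fin M} (ht : j ≤ t.val) :
    ((cg e j M).deleteEdges Fc).Adj (wl t) ul := by
  obtain ⟨y, hy⟩ := hIso (wl t)
  rw [deleteEdges_adj] at hy
  have h := nbrs_w_inactive ht hy.1
  subst h
  exact deleteEdges_adj.2 hy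

lemma mem_S_u {S : Set (Wt M)}
    (hS : IsTotalDominatingSet ((cg e j M).deleteEdges Fc) S) : ul ∈ S := by
  obtain ⟨z, hz, hadj⟩ := hS pl
  have h := nbrs_p (deleteEdges_adj.1 hadj).1
  subst h; exact hz

lemma mem_S_v {S : Set (Wt M)}
    (hS : IsTotalDominatingSet ((cg e j M).deleteEdges Fc) S) : vl ∈ S := by
  obtain ⟨z, hz, hadj⟩ := hS ql
  have h := nbrs_q (deleteEdges_adj.1 hadj).1
  subst h; exact hz

end Comp
section Comp2

variable {e : Bool} {j : ℕ} {Fc : Set (Sym2 (Wt M))}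

lemma ncard_le_three {α : Type*} (x y z : α) :
    ({x, y, z} : Set α).ncard ≤ 3 := by
  calc ({x, y, z} : Set α).ncard
      ≤ ({y, z} : Set α).ncard + 1 := Set.ncard_insert_le _ _
    _ ≤ (({z} : Set α).ncard + 1) + 1 := by
        have := Set.ncard_insert_le y ({z} : Set α); omega
    _ ≤ 3 := by simp [Set.ncard_singleton]

lemma tdn_del_le_four (hIso : NoIsolatedVerts ((cg e j M).deleteEdges Fc)) :
    totalDominationNumber ((cg e j M).deleteEdges Fc) ≤ 4 := by
  obtain ⟨x, hx⟩ := hIso ul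
  obtain ⟨y, hy⟩ := hIso vl
  have hT : IsTotalDominatingSet ((cg e j M).deleteEdges Fc) {ul, vl, x, y} := by
    intro z
    rcases z with l | t
    · cases l
      · exact ⟨x, by simp, hx⟩
      · exact ⟨y, by simp, hy⟩
      · exact ⟨ul, by simp, surv_p hIso⟩
      · exact ⟨vl, by simp, surv_q hIso⟩
    · rcases surv_w hIso t with h | h
      · exact ⟨ul, by simp, h⟩
      · exact ⟨vl, by simp, h⟩
  calc totalDominationNumber ((cg e j M).deleteEdges Fc) ≤ _ := tdn_le hT
    _ ≤ 4 := ncard_le_four _ _ _ _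

-- P4-like component : e = true, j = 0
lemma P4_le_two (hIso : NoIsolatedVerts ((cg true 0 M).deleteEdges Fc))
    (huv : s(ul, vl) ∉ Fc) :
    totalDominationNumber ((cg true 0 M).deleteEdges Fc) ≤ 2 := by
  have hT : IsTotalDominatingSet ((cg true 0 M).deleteEdges Fc) {ul, vl} := by
    intro z
    rcases z with l | t
    · cases l
      · exact ⟨vl, by simp, deleteEdges_adj.2 ⟨adj_uv 0, huv⟩⟩
      · refine ⟨ul, by simp, (deleteEdges_adj.2 ⟨adj_uv 0, huv⟩).symm⟩
      · exact ⟨ul, by simp, surv_p hIso⟩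
      · exact ⟨vl, by simp, surv_q hIso⟩
    · exact ⟨ul, by simp, surv_w_inactive hIso (Nat.zero_le _)⟩
  calc totalDominationNumber ((cg true 0 M).deleteEdges Fc) ≤ _ := tdn_le hT
    _ ≤ 2 := by rw [Set.ncard_pair (by simp : (ul : Wt M) ≠ vl)]

lemma P4_tdn_base : totalDominationNumber (cg true 0 M) = 2 := by
  have hIso : NoIsolatedVerts ((cg true 0 M).deleteEdges ∅) := by
    simpa using cg_noIso (Or.inl rfl)
  apply le_antisymm
  · have := P4_le_two (Fc := ∅) hIso (by simp)
    simpa using this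
  · apply le_tdn (cg_noIso (Or.inl rfl))
    intro S hS
    have hS' : IsTotalDominatingSet ((cg true 0 M).deleteEdges ∅) S := by simpa using hS
    have hu := mem_S_u hS'
    obtain ⟨z, hz, hadj⟩ := hS ul
    exact two_le_ncard hu hz (Adj.ne hadj)

lemma P4_four_le (hIso : NoIsolatedVerts ((cg true 0 M).deleteEdges Fc))
    (huv : s(ul, vl) ∈ Fc) :
    4 ≤ totalDominationNumber ((cg true 0 M).deleteEdges Fc) := by
  apply le_tdn hIso
  intro S hS
  have hu := mem_S_u hS
  have hv := mem_S_v hS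
  obtain ⟨z, hz, hadjz⟩ := hS ul
  rw [deleteEdges_adj] at hadjz
  obtain ⟨y, hy, hadjy⟩ := hS vl
  rw [deleteEdges_adj] at hadjy
  have hyq : y = ql := by
    rcases nbrs_v hadjy.1 with h | h | ⟨t, ht, h⟩
    · exact h
    · exfalso; apply hadjy.2; rw [h]; rwa [Sym2.eq_swap]
    · omega
  subst hyq
  rcases nbrs_u hadjz.1 with h | h | ⟨t, h⟩
  · subst h
    exact four_le_ncard hu hv hz hy (by simp) (by simp) (by simp) (by simp) (by simp) (by simp)
  · exact absurd huv (h ▸ hadjz.2)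
  · subst h
    exact four_le_ncard hu hv hz hy (by simp) (by simp) (by simp) (by simp) (by simp) (by simp)

-- gadget component : e = false
lemma gadget_three_le (hIso : NoIsolatedVerts ((cg false j M).deleteEdges Fc)) :
    3 ≤ totalDominationNumber ((cg false j M).deleteEdges Fc) := by
  apply le_tdn hIso
  intro S hS
  have hu := mem_S_u hS
  have hv := mem_S_v hS
  obtain ⟨z, hz, hadjz⟩ := hS ul
  rw [deleteEdges_adj] at hadjz
  rcases nbrs_u_false hadjz.1 with h | ⟨t, h⟩ <;> subst h
  · exact three_le_ncard hu hv hz (by simp) (by simp) (by simp)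
  · exact three_le_ncard hu hv hz (by simp) (by simp) (by simp)

lemma gadget_le_three (hIso : NoIsolatedVerts ((cg false j M).deleteEdges Fc))
    {t : Fin M} (ht : t.val < j) (h1 : s(ul, wl t) ∉ Fc) (h2 : s(vl, wl t) ∉ Fc) :
    totalDominationNumber ((cg false j M).deleteEdges Fc) ≤ 3 := by
  have hT : IsTotalDominatingSet ((cg false j M).deleteEdges Fc) {ul, vl, wl t} := by
    intro z
    rcases z with l | s
    · cases l
      · exact ⟨wl t, by simp, deleteEdges_adj.2 ⟨adj_uw false j t, h1⟩⟩
      · exact ⟨wl t, by simp, deleteEdges_adj.2 ⟨adj_vw false j t ht, h2⟩⟩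
      · exact ⟨ul, by simp, surv_p hIso⟩
      · exact ⟨vl, by simp, surv_q hIso⟩
    · rcases surv_w hIso s with h | h
      · exact ⟨ul, by simp, h⟩
      · exact ⟨vl, by simp, h⟩
  calc totalDominationNumber ((cg false j M).deleteEdges Fc) ≤ _ := tdn_le hT
    _ ≤ 3 := ncard_le_three _ _ _

lemma gadget_tdn_base (hj : 1 ≤ j) (hM : 1 ≤ M) :
    totalDominationNumber (cg false j M) = 3 := by
  have hIso : NoIsolatedVerts ((cg false j M).deleteEdges ∅) := by
    simpa using cg_noIso (Or.inr ⟨hj, hM⟩)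
  apply le_antisymm
  · have := gadget_le_three (Fc := ∅) hIso (t := ⟨0, hM⟩) (by show 0 < j; omega)
      (by simp) (by simp)
    simpa using this
  · have := gadget_three_le (Fc := ∅) hIso
    simpa using this

lemma gadget_four_le (hIso : NoIsolatedVerts ((cg false j M).deleteEdges Fc))
    (hcut : ∀ t : Fin M, t.val < j → s(ul, wl t) ∈ Fc ∨ s(vl, wl t) ∈ Fc) :
    4 ≤ totalDominationNumber ((cg false j M).deleteEdges Fc) := by
  apply le_tdn hIso
  intro S hS
  have hu := mem_S_u hS
  have hv := mem_S_v hS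
  obtain ⟨z1, hz1, hadj1⟩ := hS ul
  rw [deleteEdges_adj] at hadj1
  obtain ⟨z2, hz2, hadj2⟩ := hS vl
  rw [deleteEdges_adj] at hadj2
  have h12 : z1 ≠ z2 := by
    rcases nbrs_u_false hadj1.1 with h | ⟨t1, h⟩ <;> subst h <;>
      rcases nbrs_v_false hadj2.1 with h' | ⟨t2, ht2, h'⟩ <;> subst h' <;> try simp
    intro hcontra
    have ht12 : t1 = t2 := by simpa using hcontra
    subst ht12
    rcases hcut t1 ht2 with hc | hc
    · exact hadj1.2 hc
    · exact hadj2.2 hc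
  rcases nbrs_u_false hadj1.1 with h | ⟨t1, h⟩ <;> subst h <;>
    rcases nbrs_v_false hadj2.1 with h' | ⟨t2, ht2, h'⟩ <;> subst h' <;>
    exact four_le_ncard hu hv hz1 hz2 (by simp) (by simp) (by simp) (by simp) (by simp) h12

end Comp2

section Main

def act (r M : ℕ) : Fin r → ℕ := fun i => if i.val = 0 then M else 1

lemma act_pos {r M : ℕ} (hM : 1 ≤ M) (i : Fin r) : 1 ≤ act r M i := by
  unfold act; split <;> omega

lemma act_le {r M : ℕ} (hM : 1 ≤ M) (i : Fin r) : act r M i ≤ M := by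
  unfold act; split <;> omega

lemma sum_act {r M : ℕ} (hM : 1 ≤ M) (hr : 1 ≤ r) :
    ∑ i : Fin r, act r M i = M + (r - 1) := by
  rcases r with - | r'
  · omega
  · rw [Fin.sum_univ_succ]
    have h1 : act (r' + 1) M 0 = M := by simp [act]
    have h2 : ∀ i : Fin r', act (r' + 1) M i.succ = 1 := by
      intro i; simp [act, Fin.val_succ]
    rw [h1]
    rw [Finset.sum_congr rfl (fun i _ => h2 i)]
    simp

abbrev idx (a r : ℕ) := Fin a ⊕ Fin r

def CC (a r M : ℕ) : idx a r → SimpleGraph (Wt M) := fun i =>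
  match i with
  | Sum.inl _ => cg true 0 M
  | Sum.inr i => cg false (act r M i) M

def GG (a r M : ℕ) : SimpleGraph (idx a r × Wt M) := UG (CC a r M)

lemma CC_noIso {a r M : ℕ} (hM : 1 ≤ M) (i : idx a r) : NoIsolatedVerts (CC a r M i) := by
  cases i with
  | inl i => exact cg_noIso (Or.inl rfl)
  | inr i => exact cg_noIso (Or.inr ⟨act_pos hM i, hM⟩)

lemma GG_noIso {a r M : ℕ} (hM : 1 ≤ M) : NoIsolatedVerts (GG a r M) :=
  (UG_noIso_iff _).2 (CC_noIso hM)

lemma GG_tdn {a r M : ℕ} (hM : 1 ≤ M) :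
    totalDominationNumber (GG a r M) = 2 * a + 3 * r := by
  rw [GG, UG_tdn _ (CC_noIso hM), Fintype.sum_sum_type]
  have h1 : ∀ i : Fin a, totalDominationNumber (CC a r M (Sum.inl i)) = 2 :=
    fun i => P4_tdn_base
  have h2 : ∀ i : Fin r, totalDominationNumber (CC a r M (Sum.inr i)) = 3 :=
    fun i => gadget_tdn_base (act_pos hM i) hM
  rw [Finset.sum_congr rfl (fun i _ => h1 i), Finset.sum_congr rfl (fun i _ => h2 i)]
  simp [mul_comm]

end Main

section Fstar

variable {a r M : ℕ}

def DD (a r M : ℕ) : Type := Fin a ⊕ Σ i : Fin r, Fin (act r M i)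

instance : Fintype (DD a r M) := by unfold DD; infer_instance

lemma DD_card : Fintype.card (DD a r M) = a + ∑ i : Fin r, act r M i := by
  simp [DD]

def phif (a r M : ℕ) (hM : 1 ≤ M) : DD a r M → Sym2 (idx a r × Wt M) := fun d =>
  match d with
  | Sum.inl i => s(((Sum.inl i : idx a r), (ul : Wt M)), ((Sum.inl i : idx a r), (vl : Wt M)))
  | Sum.inr ⟨i, t⟩ => s(((Sum.inr i : idx a r), (ul : Wt M)),
      ((Sum.inr i : idx a r), (wl (Fin.castLE (act_le hM i) t) : Wt M)))

lemma phif_inj (hM : 1 ≤ M) : Function.Injective (phif a r M hM) := by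
  rintro (i | ⟨i, t⟩) (i' | ⟨i', t'⟩) h <;>
    simp only [phif, Sym2.eq_iff, Prod.mk.injEq] at h
  · rcases h with ⟨⟨h1, -⟩, -⟩ | ⟨⟨-, h2⟩, -⟩
    · rw [Sum.inl.injEq] at h1; subst h1; rfl
    · simp at h2
  · rcases h with ⟨⟨h1, -⟩, -⟩ | ⟨⟨h1, -⟩, -⟩ <;> simp at h1
  · rcases h with ⟨⟨h1, -⟩, -⟩ | ⟨⟨h1, -⟩, -⟩ <;> simp at h1
  · rcases h with ⟨⟨h1, -⟩, ⟨-, h2⟩⟩ | ⟨⟨-, h2⟩, -⟩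
    · rw [Sum.inr.injEq] at h1; subst h1
      simp only [wl, Sum.inr.injEq] at h2
      have := Fin.castLE_injective _ h2
      subst this; rfl
    · simp at h2

def Fstar (a r M : ℕ) (hM : 1 ≤ M) : Set (Sym2 (idx a r × Wt M)) :=
  Set.range (phif a r M hM)

lemma Fstar_sub (hM : 1 ≤ M) : Fstar a r M hM ⊆ (GG a r M).edgeSet := by
  rintro e ⟨d, rfl⟩
  rcases d with i | ⟨i, t⟩
  · exact (GG a r M).mem_edgeSet.2 ⟨rfl, adj_uv 0⟩
  · exact (GG a r M).mem_edgeSet.2 ⟨rfl, adj_uw false _ _⟩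

lemma Fstar_ncard (hM : 1 ≤ M) :
    (Fstar a r M hM).ncard = a + ∑ i : Fin r, act r M i := by
  classical
  rw [Fstar, Set.ncard_eq_toFinset_card', Set.toFinset_card,
    Set.card_range_of_injective (phif_inj hM), DD_card]

lemma mem_Fstar_iff (hM : 1 ≤ M) (c : idx a r) (x y : Wt M) :
    Sym2.map (Prod.mk c) s(x, y) ∈ Fstar a r M hM ↔
      ((∃ i : Fin a, c = Sum.inl i) ∧ (x = ul ∧ y = vl ∨ x = vl ∧ y = ul)) ∨
      (∃ i : Fin r, c = Sum.inr i ∧ ∃ t : Fin M, t.val < act r M i ∧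
        (x = ul ∧ y = wl t ∨ x = wl t ∧ y = ul)) := by
  rw [Fstar, Set.mem_range, Sym2.map_pair_eq]
  constructor
  · rintro ⟨d, hd⟩
    rcases d with i | ⟨i, t⟩ <;>
      simp only [phif, Sym2.eq_iff, Prod.mk.injEq] at hd
    · rcases hd with ⟨⟨hc, hx⟩, ⟨-, hy⟩⟩ | ⟨⟨hc, hy⟩, ⟨-, hx⟩⟩
      · exact Or.inl ⟨⟨i, hc.symm⟩, Or.inl ⟨hx.symm, hy.symm⟩⟩
      · exact Or.inl ⟨⟨i, hc.symm⟩, Or.inr ⟨hx.symm, hy.symm⟩⟩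
    · rcases hd with ⟨⟨hc, hx⟩, ⟨-, hy⟩⟩ | ⟨⟨hc, hy⟩, ⟨-, hx⟩⟩
      · exact Or.inr ⟨i, hc.symm, Fin.castLE (act_le hM i) t, by simpa using t.isLt,
          Or.inl ⟨hx.symm, hy.symm⟩⟩
      · exact Or.inr ⟨i, hc.symm, Fin.castLE (act_le hM i) t, by simpa using t.isLt,
          Or.inr ⟨hx.symm, hy.symm⟩⟩
  · rintro (⟨⟨i, rfl⟩, ⟨rfl, rfl⟩ | ⟨rfl, rfl⟩⟩ | ⟨i, rfl, t, ht, ⟨rfl, rfl⟩ | ⟨rfl, rfl⟩⟩)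
    · exact ⟨Sum.inl i, rfl⟩
    · exact ⟨Sum.inl i, by simp only [phif]; exact Sym2.eq_swap⟩
    · refine ⟨Sum.inr ⟨i, ⟨t.val, ht⟩⟩, ?_⟩
      have hc : Fin.castLE (act_le hM i) ⟨t.val, ht⟩ = t := rfl
      simp only [phif, hc]
    · refine ⟨Sum.inr ⟨i, ⟨t.val, ht⟩⟩, ?_⟩
      have hc : Fin.castLE (act_le hM i) ⟨t.val, ht⟩ = t := rfl
      simp only [phif, hc]
      exact Sym2.eq_swap

end Fstar

section DelFstar

variable {a r M : ℕ}

lemma pre_mem_iff (hM : 1 ≤ M) (c : idx a r) (x y : Wt M) :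
    s(x, y) ∈ Sym2.map (Prod.mk c) ⁻¹' Fstar a r M hM ↔
      ((∃ i : Fin a, c = Sum.inl i) ∧ (x = ul ∧ y = vl ∨ x = vl ∧ y = ul)) ∨
      (∃ i : Fin r, c = Sum.inr i ∧ ∃ t : Fin M, t.val < act r M i ∧
        (x = ul ∧ y = wl t ∨ x = wl t ∧ y = ul)) := by
  rw [Set.mem_preimage, mem_Fstar_iff hM]

lemma Fstar_pre_noIso (hM : 1 ≤ M) (c : idx a r) :
    NoIsolatedVerts ((CC a r M c).deleteEdges (Sym2.map (Prod.mk c) ⁻¹' Fstar a r M hM)) := by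
  cases c with
  | inl i =>
    show NoIsolatedVerts ((cg true 0 M).deleteEdges _)
    intro z
    rcases z with l | t
    · cases l
      · exact ⟨pl, deleteEdges_adj.2 ⟨adj_up true 0, by rw [pre_mem_iff hM]; simp⟩⟩
      · exact ⟨ql, deleteEdges_adj.2 ⟨adj_vq true 0, by rw [pre_mem_iff hM]; simp⟩⟩
      · exact ⟨ul, deleteEdges_adj.2 ⟨(adj_up true 0).symm, by rw [pre_mem_iff hM]; simp⟩⟩
      · exact ⟨vl, deleteEdges_adj.2 ⟨(adj_vq true 0).symm, by rw [pre_mem_iff hM]; simp⟩⟩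
    · exact ⟨ul, deleteEdges_adj.2 ⟨(adj_uw true 0 t).symm, by rw [pre_mem_iff hM]; simp⟩⟩
  | inr i =>
    show NoIsolatedVerts ((cg false (act r M i) M).deleteEdges _)
    intro z
    rcases z with l | t
    · cases l
      · exact ⟨pl, deleteEdges_adj.2 ⟨adj_up false _, by rw [pre_mem_iff hM]; simp⟩⟩
      · exact ⟨ql, deleteEdges_adj.2 ⟨adj_vq false _, by rw [pre_mem_iff hM]; simp⟩⟩
      · exact ⟨ul, deleteEdges_adj.2 ⟨(adj_up false _).symm, by rw [pre_mem_iff hM]; simp⟩⟩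
      · exact ⟨vl, deleteEdges_adj.2 ⟨(adj_vq false _).symm, by rw [pre_mem_iff hM]; simp⟩⟩
    · by_cases ht : t.val < act r M i
      · refine ⟨vl, deleteEdges_adj.2 ⟨(adj_vw false _ t ht).symm, ?_⟩⟩
        rw [pre_mem_iff hM]; simp
      · refine ⟨ul, deleteEdges_adj.2 ⟨(adj_uw false _ t).symm, fun hmem => ?_⟩⟩
        rw [pre_mem_iff hM] at hmem
        rcases hmem with ⟨-, ⟨h1, -⟩ | ⟨h1, -⟩⟩ | ⟨i', hii', t', ht', ⟨h1, -⟩ | ⟨h1, -⟩⟩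
        · exact absurd h1 (by simp)
        · exact absurd h1 (by simp)
        · exact absurd h1 (by simp)
        · have h3 : i = i' := by simpa using hii'
          subst h3
          have h2 : t = t' := by simpa [wl] using h1
          subst h2; exact ht ht'

lemma Fstar_pre_tdn (hM : 1 ≤ M) (c : idx a r) :
    totalDominationNumber
      ((CC a r M c).deleteEdges (Sym2.map (Prod.mk c) ⁻¹' Fstar a r M hM)) = 4 := by
  refine le_antisymm ?_ ?_
  · cases c with
    | inl i => exact tdn_del_le_four (Fstar_pre_noIso hM (Sum.inl i))
    | inr i => exact tdn_del_le_four (Fstar_pre_noIso hM (Sum.inr i))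
  · cases c with
    | inl i =>
      refine P4_four_le (Fstar_pre_noIso hM (Sum.inl i)) ?_
      rw [pre_mem_iff hM]
      exact Or.inl ⟨⟨i, rfl⟩, Or.inl ⟨rfl, rfl⟩⟩
    | inr i =>
      refine gadget_four_le (Fstar_pre_noIso hM (Sum.inr i)) ?_
      intro t ht
      left
      rw [pre_mem_iff hM]
      exact Or.inr ⟨i, rfl, t, ht, Or.inl ⟨rfl, rfl⟩⟩

lemma GG_del_Fstar_noIso (hM : 1 ≤ M) :
    NoIsolatedVerts ((GG a r M).deleteEdges (Fstar a r M hM)) := by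
  rw [GG, UG_deleteEdges]
  exact (UG_noIso_iff _).2 (fun i => Fstar_pre_noIso hM i)

lemma GG_del_Fstar_tdn (hM : 1 ≤ M) :
    totalDominationNumber ((GG a r M).deleteEdges (Fstar a r M hM)) = 4 * (a + r) := by
  rw [GG, UG_deleteEdges, UG_tdn _ (fun i => Fstar_pre_noIso hM i)]
  rw [Finset.sum_congr rfl (fun i _ => Fstar_pre_tdn hM i)]
  simp [Finset.sum_const, Fintype.card_sum, mul_comm]

end DelFstar

section Lower

lemma map_prodmk_eq {α β : Type*} {c c' : β} {e e' : Sym2 α}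
    (h : Sym2.map (Prod.mk c) e = Sym2.map (Prod.mk c') e') : c = c' ∧ e = e' := by
  induction e using Sym2.ind with | _ x y =>
  induction e' using Sym2.ind with | _ x' y' =>
  rw [Sym2.map_pair_eq, Sym2.map_pair_eq, Sym2.eq_iff] at h
  rcases h with ⟨h1, h2⟩ | ⟨h1, h2⟩ <;> rw [Prod.mk.injEq] at h1 h2
  · exact ⟨h1.1, by rw [Sym2.eq_iff]; exact Or.inl ⟨h1.2, h2.2⟩⟩
  · exact ⟨h1.1, by rw [Sym2.eq_iff]; exact Or.inr ⟨h1.2, h2.2⟩⟩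

lemma GG_lower {a r M : ℕ} (hM : 1 ≤ M) {F : Set (Sym2 (idx a r × Wt M))}
    (hsub : F ⊆ (GG a r M).edgeSet)
    (hIso : NoIsolatedVerts ((GG a r M).deleteEdges F))
    (htdn : totalDominationNumber (GG a r M) + (2 * a + r) ≤
      totalDominationNumber ((GG a r M).deleteEdges F)) :
    a + ∑ i : Fin r, act r M i ≤ F.ncard := by
  classical
  set Fi : idx a r → Set (Sym2 (Wt M)) :=
    fun c => Sym2.map (Prod.mk c) ⁻¹' F with hFi
  rw [GG, UG_deleteEdges] at hIso htdn
  have hIso' : ∀ c, NoIsolatedVerts ((CC a r M c).deleteEdges (Fi c)) :=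
    (UG_noIso_iff _).1 hIso
  rw [UG_tdn _ hIso'] at htdn
  rw [show UG (CC a r M) = GG a r M from rfl, GG_tdn hM] at htdn
  -- every component has total domination number at least 4
  have hle : ∀ c, totalDominationNumber ((CC a r M c).deleteEdges (Fi c)) ≤ 4 := by
    intro c
    cases c with
    | inl i => exact tdn_del_le_four (hIso' (Sum.inl i))
    | inr i => exact tdn_del_le_four (hIso' (Sum.inr i))
  have hge : ∀ c, 4 ≤ totalDominationNumber ((CC a r M c).deleteEdges (Fi c)) := by
    intro c0
    by_contra hc0
    push_neg at hc0
    have hlt : ∑ c, totalDominationNumber ((CC a r M c).deleteEdges (Fi c)) <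
        ∑ _c : idx a r, 4 :=
      Finset.sum_lt_sum (fun c _ => hle c) ⟨c0, Finset.mem_univ _, hc0⟩
    have hcard : ∑ _c : idx a r, 4 = 4 * (a + r) := by
      simp [Finset.sum_const, Fintype.card_sum, mul_comm]
    omega
  -- P4-like components: the middle edge is cut
  have huv : ∀ i : Fin a, s((ul : Wt M), vl) ∈ Fi (Sum.inl i) := by
    intro i
    by_contra hno
    have h2 : totalDominationNumber ((cg true 0 M).deleteEdges (Fi (Sum.inl i))) ≤ 2 :=
      P4_le_two (hIso' (Sum.inl i)) hno
    have h4 := hge (Sum.inl i)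
    have he : CC a r M (Sum.inl i) = cg true 0 M := rfl
    rw [he] at h4
    omega
  -- gadget components: every active w is cut
  have hcut : ∀ (i : Fin r) (t : Fin M), t.val < act r M i →
      s((ul : Wt M), wl t) ∈ Fi (Sum.inr i) ∨ s((vl : Wt M), wl t) ∈ Fi (Sum.inr i) := by
    intro i t ht
    by_contra hno
    push_neg at hno
    have h3 : totalDominationNumber
        ((cg false (act r M i) M).deleteEdges (Fi (Sum.inr i))) ≤ 3 :=
      gadget_le_three (hIso' (Sum.inr i)) ht hno.1 hno.2
    have h4 := hge (Sum.inr i)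
    have he : CC a r M (Sum.inr i) = cg false (act r M i) M := rfl
    rw [he] at h4
    omega
  -- build an injection from DD into F
  have hcut' : ∀ (i : Fin r) (t : Fin (act r M i)), ∃ z : Sym2 (Wt M),
      z ∈ Fi (Sum.inr i) ∧ (z = s(ul, wl (Fin.castLE (act_le hM i) t)) ∨
        z = s(vl, wl (Fin.castLE (act_le hM i) t))) := by
    intro i t
    rcases hcut i (Fin.castLE (act_le hM i) t) (by simpa using t.isLt) with h | h
    exacts [⟨_, h, Or.inl rfl⟩, ⟨_, h, Or.inr rfl⟩]
  choose g hg1 hg2 using hcut'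
  set ψ : DD a r M → Sym2 (idx a r × Wt M) :=
    Sum.elim
      (fun i => Sym2.map (Prod.mk (Sum.inl i : idx a r)) s(ul, vl))
      (fun p => Sym2.map (Prod.mk (Sum.inr p.1 : idx a r)) (g p.1 p.2)) with hψ
  have hmem : ∀ d, ψ d ∈ F := by
    rintro (i | ⟨i, t⟩)
    · exact huv i
    · exact hg1 i t
  have hinj : Function.Injective ψ := by
    rintro (i | ⟨i, t⟩) (i' | ⟨i', t'⟩) h <;> simp only [hψ, Sum.elim_inl, Sum.elim_inr] at h
    · obtain ⟨hc, -⟩ := map_prodmk_eq h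
      rw [Sum.inl.injEq] at hc; subst hc; rfl
    · obtain ⟨hc, -⟩ := map_prodmk_eq h
      exact absurd hc (by simp)
    · obtain ⟨hc, -⟩ := map_prodmk_eq h
      exact absurd hc (by simp)
    · obtain ⟨hc, hg⟩ := map_prodmk_eq h
      rw [Sum.inr.injEq] at hc; subst hc
      have ht : Fin.castLE (act_le hM i) t = Fin.castLE (act_le hM i) t' := by
        rcases hg2 i t with hE | hE <;> rcases hg2 i t' with hE' | hE' <;>
          rw [hE, hE'] at hg <;> rw [Sym2.eq_iff] at hg <;>
          rcases hg with ⟨h1, h2⟩ | ⟨h1, h2⟩ <;>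
          first
            | (simpa [wl] using h2)
            | (simpa [wl] using h1)
      have ht' : t = t' := Fin.castLE_injective _ ht
      subst ht'; rfl
  have hinj' : Function.Injective (fun d => (⟨ψ d, hmem d⟩ : F)) := by
    intro d d' h
    apply hinj
    simpa using congrArg Subtype.val h
  have hcard := Nat.card_le_card_of_injective _ hinj'
  rw [Nat.card_eq_fintype_card, DD_card, Nat.card_coe_set_eq] at hcard
  exact hcard

end Lower

section Final

lemma sum_act' (r M : ℕ) (hM : 1 ≤ M) :
    ∑ i : Fin r, act r M i = if r = 0 then 0 else M + (r - 1) := by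
  cases r with
  | zero => simp
  | succ r' => rw [sum_act hM (by omega)]; simp

lemma params (k b : ℕ) (hk : 1 ≤ k) (hb : 1 ≤ b) (hkb : k ≤ 2 * b) :
    ∃ a r M : ℕ, 1 ≤ M ∧ 2 * a + r = k ∧ a + ∑ i : Fin r, act r M i = b := by
  refine ⟨k - b, k - 2 * (k - b), b - k + 1, by omega, by omega, ?_⟩
  rw [sum_act' _ _ (by omega)]
  split_ifs with h <;> omega

theorem main_thm (k b : ℕ) (hk : 1 ≤ k) (hb : 1 ≤ b) (hkb : k ≤ 2 * b) :
    ∃ (V : Type) (_ : Fintype V) (G : SimpleGraph V),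
      NoIsolatedVerts G ∧
      (∃ F : Set (Sym2 V), F ⊆ G.edgeSet ∧
        NoIsolatedVerts (G.deleteEdges F) ∧
        totalDominationNumber G + k ≤ totalDominationNumber (G.deleteEdges F)) ∧
      kTotalBondage G k = b := by
  obtain ⟨a, r, M, hM, hk', hsum⟩ := params k b hk hb hkb
  have hineq : totalDominationNumber (GG a r M) + k ≤
      totalDominationNumber ((GG a r M).deleteEdges (Fstar a r M hM)) := by
    rw [GG_tdn hM, GG_del_Fstar_tdn hM]; omega
  have hmemb : b ∈ {m : ℕ | ∃ F : Set (Sym2 (idx a r × Wt M)),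
      F ⊆ (GG a r M).edgeSet ∧ F.ncard = m ∧
      NoIsolatedVerts ((GG a r M).deleteEdges F) ∧
      totalDominationNumber (GG a r M) + k ≤
        totalDominationNumber ((GG a r M).deleteEdges F)} :=
    ⟨Fstar a r M hM, Fstar_sub hM, by rw [Fstar_ncard hM, hsum],
      GG_del_Fstar_noIso hM, hineq⟩
  refine ⟨idx a r × Wt M, inferInstance, GG a r M, GG_noIso hM,
    ⟨Fstar a r M hM, Fstar_sub hM, GG_del_Fstar_noIso hM, hineq⟩, ?_⟩
  apply le_antisymm
  · exact Nat.sInf_le hmemb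
  · apply le_csInf ⟨b, hmemb⟩
    rintro m ⟨F, hFsub, hFcard, hFIso, hFtdn⟩
    rw [← hk'] at hFtdn
    have hlow := GG_lower hM hFsub hFIso hFtdn
    omega

end Final

end KTB

/-- For any positive integers `k` and `b` with `b ≥ k/2`, there exists a finite
graph with no isolated vertices whose `k`-total bondage number equals `b`. -/
theorem exists_graph_kTotalBondage_eq (k b : ℕ) (hk : 1 ≤ k) (hb : 1 ≤ b)
    (hkb : k ≤ 2 * b) :
    ∃ (V : Type) (_ : Fintype V) (G : SimpleGraph V),
      NoIsolatedVerts G ∧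
      (∃ F : Set (Sym2 V), F ⊆ G.edgeSet ∧
        NoIsolatedVerts (G.deleteEdges F) ∧
        totalDominationNumber G + k ≤ totalDominationNumber (G.deleteEdges F)) ∧
      kTotalBondage G k = b :=
  KTB.main_thm k b hk hb hkb
end
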